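/- There exists a constant c > 0 such that the following holds in any real inner product space: for every w with ‖w‖ = 1, every vector g, and every η > 0 with η‖g‖ ≤ c, the vector u := w − η g is nonzero, and the normalized update w' := u/‖u‖ admits the decomposition w' = w − η·(g − ⟨w, g⟩·w) + e, where the residual e := w' − w + η(g − ⟨w,g⟩w) satisfies ‖e‖ ≤ 3·η²·‖g‖². -/

import Mathlib

open scoped RealInnerProductSpace

set_option maxHeartbeats 1000000 in
private lemma stmt8_key (r b t : ℝ) (ht : 0 ≤ t) (ht' : t ≤ 1/10) (hb : |b| ≤ t)
    (hr0 : 0 ≤ r) (hr : r^2 = 1 - 2*b + t^2) :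
    |1 - r - b*r| + |b| * t ≤ 3*t^2 := by
  rcases abs_le.mp hb with ⟨hb1, hb2⟩
  have h1 : 1 - t ≤ r := by nlinarith [sq_nonneg (r - (1 - t))]
  have h2 : r ≤ 1 + t := by nlinarith [sq_nonneg (r - (1 + t))]
  have e1 : (1 - r - b*r)*(1+r) = b*(1-r)*(2+r) - t^2 := by linear_combination -hr
  rcases abs_cases b with ⟨hb3, hb4⟩ | ⟨hb3, hb4⟩ <;>
    rcases abs_cases (1 - r - b*r) with ⟨h3, h4⟩ | ⟨h3, h4⟩ <;> rw [hb3, h3]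
  · nlinarith [e1, mul_nonneg hb4 ht, sq_nonneg (t-b), sq_nonneg b, mul_nonneg ht ht]
  · nlinarith [e1, mul_nonneg hb4 ht, sq_nonneg (t-b), sq_nonneg b, mul_nonneg ht ht]
  · nlinarith [e1, mul_nonneg (neg_nonneg.mpr hb4.le) ht, sq_nonneg (t+b), sq_nonneg b,
      mul_nonneg ht ht]
  · nlinarith [e1, mul_nonneg (neg_nonneg.mpr hb4.le) ht, sq_nonneg (t+b), sq_nonneg b,
      mul_nonneg ht ht]

theorem stmt8 : ∃ c : ℝ, 0 < c ∧
    ∀ (E : Type) [NormedAddCommGroup E] [InnerProductSpace ℝ E]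
      (w g : E) (η : ℝ), ‖w‖ = 1 → 0 < η → η * ‖g‖ ≤ c →
      w - η • g ≠ 0 ∧
        ‖(‖w - η • g‖⁻¹ • (w - η • g)) - w + η • (g - ⟪w, g⟫ • w)‖ ≤
          3 * η ^ 2 * ‖g‖ ^ 2 := by
  refine ⟨1/10, by norm_num, fun E _ _ w g η hw hη hc => ?_⟩
  set t := η * ‖g‖ with htdef
  have ht0 : 0 ≤ t := mul_nonneg hη.le (norm_nonneg g)
  set a : ℝ := ⟪w, g⟫ with hadef
  set b := η * a with hbdef
  set r := ‖w - η • g‖ with hrdef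
  have hr0 : 0 ≤ r := norm_nonneg _
  have hrsq : r^2 = 1 - 2*b + t^2 := by
    rw [hrdef, htdef, hbdef, hadef, @norm_sub_sq_real, real_inner_smul_right, norm_smul, hw,
      Real.norm_eq_abs, abs_of_pos hη]
    ring
  have hba : |b| ≤ t := by
    rw [hbdef, abs_mul, abs_of_pos hη]
    have := abs_real_inner_le_norm w g
    rw [hw, one_mul] at this
    exact mul_le_mul_of_nonneg_left this hη.le
  have h1 : 1 - t ≤ r := by
    rcases abs_le.mp hba with ⟨hb1, hb2⟩
    nlinarith [sq_nonneg (r - (1 - t))]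
  have hrpos : 0 < r := by linarith
  have hune : w - η • g ≠ 0 := by
    intro h
    rw [hrdef, h, norm_zero] at hrpos
    exact lt_irrefl 0 hrpos
  refine ⟨hune, ?_⟩
  have hid : (‖w - η • g‖⁻¹ • (w - η • g)) - w + η • (g - a • w)
      = (r⁻¹ - 1 - b) • (w - η • g) - (η^2 * a) • g := by
    rw [← hrdef, hbdef]
    module
  rw [hid]
  have hnb : ‖(r⁻¹ - 1 - b) • (w - η • g) - (η^2 * a) • g‖
      ≤ |r⁻¹ - 1 - b| * r + |η^2 * a| * ‖g‖ := by
    refine (norm_sub_le _ _).trans ?_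
    rw [norm_smul, norm_smul, ← hrdef, Real.norm_eq_abs, Real.norm_eq_abs]
  refine hnb.trans ?_
  have hq1 : |r⁻¹ - 1 - b| * r = |1 - r - b*r| := by
    have h' : (r⁻¹ - 1 - b) * r = 1 - r - b*r := by
      field_simp
    calc |r⁻¹ - 1 - b| * r = |(r⁻¹ - 1 - b) * r| := by
          rw [abs_mul, abs_of_pos hrpos]
      _ = |1 - r - b*r| := by rw [h']
  have hq2 : |η^2 * a| * ‖g‖ = |b| * t := by
    rw [abs_mul, abs_of_nonneg (sq_nonneg η), hbdef, htdef, abs_mul, abs_of_pos hη]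
    ring
  rw [hq1, hq2]
  have h3 : 3 * η ^ 2 * ‖g‖ ^ 2 = 3 * t^2 := by rw [htdef]; ring
  rw [h3]
  exact stmt8_key r b t ht0 hc hba hr0 hrsq
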